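/- Let n ≥ 1, let k ≥ 1, and let C₁, …, C_k be subsets of ℝⁿ, each nonempty, closed, and closed under multiplication by nonnegative scalars (i.e. cones), such that ⋂_{i=1}^{k} C_i ⊆ {0}. Then there exists r > 0 such that for every p ∈ ℝⁿ there is an index i with dist(p, C_i) ≥ r·‖p‖, where dist denotes the Euclidean distance from a point to a set. -/

import Mathlib

/-- Finitely many nonempty closed cones in `ℝⁿ` whose common intersection is
contained in `{0}` admit a constant `r > 0` such that every point `p` is at distance at least
`r·‖p‖` from at least one of the cones. -/
theorem statement10 (n : ℕ) (hn : 1 ≤ n) (k : ℕ) (hk : 1 ≤ k)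
    (C : Fin k → Set (EuclideanSpace ℝ (Fin n)))
    (hne : ∀ i, (C i).Nonempty)
    (hcl : ∀ i, IsClosed (C i))
    (hcone : ∀ i, ∀ t : ℝ, 0 ≤ t → ∀ x ∈ C i, t • x ∈ C i)
    (hint : (⋂ i, C i) ⊆ {0}) :
    ∃ r > (0 : ℝ), ∀ p : EuclideanSpace ℝ (Fin n), ∃ i,
      r * ‖p‖ ≤ Metric.infDist p (C i) := by
  haveI : Nonempty (Fin k) := ⟨⟨0, hk⟩⟩
  haveI : Nonempty (Fin n) := ⟨⟨0, hn⟩⟩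
  haveI : Nontrivial (EuclideanSpace ℝ (Fin n)) := by
    refine ⟨EuclideanSpace.single ⟨0, hn⟩ (1:ℝ), 0, fun h => ?_⟩
    have := congrArg (fun v => v ⟨0, hn⟩) h
    simp [EuclideanSpace.single_apply] at this
  set f : EuclideanSpace ℝ (Fin n) → ℝ :=
    fun u => Finset.univ.sup' Finset.univ_nonempty (fun i => Metric.infDist u (C i)) with hf
  have hfc : Continuous f :=
    Continuous.finset_sup'_apply Finset.univ_nonempty
      (fun i _ => Metric.continuous_infDist_pt (C i))
  have hsph : IsCompact (Metric.sphere (0 : EuclideanSpace ℝ (Fin n)) 1) :=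
    isCompact_sphere 0 1
  have hsne : (Metric.sphere (0 : EuclideanSpace ℝ (Fin n)) 1).Nonempty :=
    NormedSpace.sphere_nonempty.mpr zero_le_one
  obtain ⟨u₀, hu₀, hmin⟩ := hsph.exists_isMinOn hsne hfc.continuousOn
  have hpos : 0 < f u₀ := by
    have hu0ne : u₀ ≠ 0 := by
      intro h
      rw [mem_sphere_zero_iff_norm] at hu₀
      simp [h] at hu₀
    have : u₀ ∉ ⋂ i, C i := fun h => hu0ne (hint h)
    obtain ⟨i, hi⟩ := by simpa [Set.mem_iInter] using this
    have h1 : 0 < Metric.infDist u₀ (C i) :=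
      ((hcl i).notMem_iff_infDist_pos (hne i)).mp hi
    refine lt_of_lt_of_le h1 ?_
    exact Finset.le_sup' (fun j => Metric.infDist u₀ (C j)) (Finset.mem_univ i)
  refine ⟨f u₀, hpos, fun p => ?_⟩
  by_cases hp : p = 0
  · exact ⟨⟨0, hk⟩, by simp [hp, Metric.infDist_nonneg]⟩
  · have hnp : 0 < ‖p‖ := norm_pos_iff.mpr hp
    set u : EuclideanSpace ℝ (Fin n) := ‖p‖⁻¹ • p with hu
    have hus : u ∈ Metric.sphere (0 : EuclideanSpace ℝ (Fin n)) 1 := by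
      rw [mem_sphere_zero_iff_norm, hu, norm_smul, norm_inv, norm_norm,
        inv_mul_cancel₀ hnp.ne']
    have hfu : f u₀ ≤ f u := hmin hus
    obtain ⟨i, -, hi⟩ := Finset.exists_mem_eq_sup' (Finset.univ_nonempty)
      (fun i => Metric.infDist u (C i))
    have hiu : f u₀ ≤ Metric.infDist u (C i) := le_of_le_of_eq hfu hi
    refine ⟨i, le_of_not_gt fun hlt => ?_⟩
    obtain ⟨y, hy, hdy⟩ := (Metric.infDist_lt_iff (hne i)).mp hlt
    have hz : ‖p‖⁻¹ • y ∈ C i := hcone i _ (inv_nonneg.mpr hnp.le) y hy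
    have h1 : Metric.infDist u (C i) ≤ dist u (‖p‖⁻¹ • y) :=
      Metric.infDist_le_dist_of_mem hz
    have h2 : dist p y = ‖p‖ * dist u (‖p‖⁻¹ • y) := by
      rw [dist_eq_norm, dist_eq_norm, hu, ← smul_sub, norm_smul, norm_inv, norm_norm]
      field_simp
    have : f u₀ * ‖p‖ ≤ dist p y := by
      rw [h2, mul_comm]
      exact mul_le_mul_of_nonneg_left (le_trans hiu h1) hnp.le
    exact absurd hdy (not_lt.mpr this)
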